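/- arXiv:1510.00586 — 2 statements merged into one kernel-verified Lean document; each statement's English description precedes it below -/
import Mathlib

section
/- Free amalgamation property of (K₀, ≤): let G be a finite graph whose vertex set is B ∪ C, let A = B ∩ C, and suppose there are no edges of G between B \ A and C \ A. If the induced subgraphs of G on B and on C are both in K₀, and A is self-sufficient in B and A is self-sufficient in C, then G ∈ K₀ (that is, δ(D) ≥ 0 for every set D of vertices of G). -/
open scoped Cardinal

/-- Number of edges of the graph `G` with both endpoints in `A`
(ordered pairs counted and divided by two). -/
noncomputable def edgeCount {V : Type*} (G : SimpleGraph V) (A : Set V) : ℕ :=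
  {p : V × V | p.1 ∈ A ∧ p.2 ∈ A ∧ G.Adj p.1 p.2}.ncard / 2

/-- The pre-dimension `δ(A) = m·|A| − e(A)`. -/
noncomputable def delta {V : Type*} (m : ℕ) (G : SimpleGraph V) (A : Set V) : ℤ :=
  (m : ℤ) * A.ncard - edgeCount G A

/-- `A` is self-sufficient (`≤`-closed) in `B`:  `A ⊆ B` and `δ(A') ≥ δ(A)` for
every finite `A'` with `A ⊆ A' ⊆ B`. -/
def SelfSuff {V : Type*} (m : ℕ) (G : SimpleGraph V) (A B : Set V) : Prop :=
  A ⊆ B ∧ ∀ A' : Set V, A'.Finite → A ⊆ A' → A' ⊆ B → delta m G A ≤ delta m G A'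

/-- A graph belongs to the class `K₀` if `δ(A') ≥ 0` for every set `A'` of its
vertices (used for finite graphs). -/
def InK0 {V : Type*} (m : ℕ) (G : SimpleGraph V) : Prop :=
  ∀ A : Set V, 0 ≤ delta m G A

/-- `G` is a `(K₀,≤)`-generic graph: (i) it is the union of an increasing chain of
finite self-sufficient subsets; (ii) every isomorphism between finite self-sufficient
induced subgraphs extends to an automorphism; (iii) every finite graph in `K₀` is
isomorphic to the induced subgraph on some finite self-sufficient subset. -/
def IsGeneric (m : ℕ) {V : Type} (G : SimpleGraph V) : Prop :=
  (∃ F : ℕ → Set V, (∀ n, (F n).Finite) ∧ (∀ n, F n ⊆ F (n + 1)) ∧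
      (∀ n, SelfSuff m G (F n) Set.univ) ∧ (⋃ n, F n) = Set.univ) ∧
  (∀ A B : Set V, A.Finite → B.Finite → SelfSuff m G A Set.univ → SelfSuff m G B Set.univ →
      ∀ e : G.induce A ≃g G.induce B, ∃ g : G ≃g G, ∀ a : A, g a = (e a : V)) ∧
  (∀ (W : Type) (_ : Fintype W) (H : SimpleGraph W), InK0 m H →
      ∃ s : Set V, s.Finite ∧ SelfSuff m G s Set.univ ∧ Nonempty (H ≃g G.induce s))

/-- The self-sufficient closure `cl(A)`: the intersection of all finite
self-sufficient subsets of the ambient graph containing `A` (which is the smallest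
such set whenever a smallest one exists). -/
def scl {V : Type*} (m : ℕ) (G : SimpleGraph V) (A : Set V) : Set V :=
  ⋂₀ {B : Set V | A ⊆ B ∧ B.Finite ∧ SelfSuff m G B Set.univ}

/-- The dimension `d(A) = δ(cl(A))`. -/
noncomputable def gdim {V : Type*} (m : ℕ) (G : SimpleGraph V) (A : Set V) : ℤ :=
  delta m G (scl m G A)

/-- The geometric closure
`gcl(X) = { v : d(A ∪ {v}) = d(A) for some finite A ⊆ X }`. -/
def gcl {V : Type*} (m : ℕ) (G : SimpleGraph V) (X : Set V) : Set V :=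
  {v | ∃ A : Set V, A ⊆ X ∧ A.Finite ∧ gdim m G (A ∪ {v}) = gdim m G A}

/-- The pointwise stabilizer `Aut_A(M)` of a set `A` of vertices, as a subgroup of
the automorphism group. -/
def pointStab {V : Type*} (G : SimpleGraph V) (A : Set V) : Subgroup (G ≃g G) where
  carrier := {g | ∀ a ∈ A, g a = a}
  one_mem' := fun a _ => rfl
  mul_mem' := by
    intro g h hg hh a ha
    show g (h a) = a
    rw [hh a ha, hg a ha]
  inv_mem' := by
    intro g hg a ha
    show g⁻¹ a = a
    conv_lhs => rw [← hg a ha]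
    simp

/-- The setwise stabilizer `Aut_{{X}}(M) = { g : g[X] = X }` of a set `X` of
vertices, as a subgroup of the automorphism group. -/
def setStab {V : Type*} (G : SimpleGraph V) (X : Set V) : Subgroup (G ≃g G) where
  carrier := {g | (fun v => g v) '' X = X}
  one_mem' := by simp
  mul_mem' := by
    intro g h hg hh
    show (fun v => g (h v)) '' X = X
    rw [show (fun v => g (h v)) = (fun v => g v) ∘ (fun v => h v) from rfl,
      Set.image_comp, hh, hg]
  inv_mem' := by
    intro g hg
    show (fun v => g⁻¹ v) '' X = X
    conv_lhs => rw [← hg]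
    rw [← Set.image_comp]
    have : (fun v => g⁻¹ v) ∘ (fun v => g v) = id := by
      funext v
      show g⁻¹ (g v) = v
      simp
    rw [this, Set.image_id]

/-- The topology of pointwise convergence on the automorphism group of a graph
(the vertex set being discrete). -/
def autTop (V : Type*) (G : SimpleGraph V) : TopologicalSpace (G ≃g G) :=
  TopologicalSpace.induced (fun g => (g : V → V))
    (@Pi.topologicalSpace V (fun _ => V) (fun _ => ⊥))


section Aux

variable {V : Type*} [Fintype V]

/-- The set of ordered adjacent pairs inside `A`. -/
def pairSet (G : SimpleGraph V) (A : Set V) : Set (V × V) :=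
  {p : V × V | p.1 ∈ A ∧ p.2 ∈ A ∧ G.Adj p.1 p.2}

/-- The restriction of `G` to `A`, as a graph on `V`. -/
def restr (G : SimpleGraph V) (A : Set V) : SimpleGraph V where
  Adj x y := x ∈ A ∧ y ∈ A ∧ G.Adj x y
  symm := ⟨fun x y ⟨hx, hy, h⟩ => ⟨hy, hx, h.symm⟩⟩
  loopless := ⟨fun x ⟨_, _, h⟩ => G.loopless.irrefl x h⟩

lemma even_pairSet (G : SimpleGraph V) (A : Set V) : Even (pairSet G A).ncard := by
  classical
  have h : pairSet G A =
      ↑(Finset.univ.filter fun p : V × V => (restr G A).Adj p.1 p.2) := by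
    ext p; simp only [Finset.coe_filter, Finset.mem_univ, true_and]; rfl
  have key := SimpleGraph.two_mul_card_edgeFinset (G := restr G A)
  have hfe : (Finset.univ.filter fun (x, y) => (restr G A).Adj x y)
      = Finset.univ.filter fun p : V × V => (restr G A).Adj p.1 p.2 := by
    apply Finset.filter_congr
    rintro ⟨x, y⟩ _
    rfl
  rw [h, Set.ncard_coe_finset, ← hfe, ← key]
  exact even_two_mul _

lemma two_mul_edgeCount (G : SimpleGraph V) (A : Set V) :
    2 * edgeCount G A = (pairSet G A).ncard := by
  obtain ⟨k, hk⟩ := even_pairSet G A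
  have h2 : (pairSet G A).ncard = 2 * k := by omega
  rw [edgeCount]
  show 2 * ((pairSet G A).ncard / 2) = (pairSet G A).ncard
  omega

lemma two_mul_delta (m : ℕ) (G : SimpleGraph V) (A : Set V) :
    2 * delta m G A = 2 * (m : ℤ) * A.ncard - (pairSet G A).ncard := by
  rw [delta, ← two_mul_edgeCount]
  push_cast
  ring

lemma pairSet_mono (G : SimpleGraph V) {A A' : Set V} (h : A ⊆ A') :
    pairSet G A ⊆ pairSet G A' :=
  fun _ h2 => ⟨h h2.1, h h2.2.1, h2.2.2⟩

lemma pairSet_inter (G : SimpleGraph V) (X Y : Set V) :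
    pairSet G X ∩ pairSet G Y = pairSet G (X ∩ Y) := by
  ext p
  simp only [pairSet, Set.mem_inter_iff, Set.mem_setOf_eq]
  tauto

/-- Submodularity of `δ`. -/
lemma delta_submod (m : ℕ) (G : SimpleGraph V) (X Y : Set V) :
    delta m G (X ∪ Y) + delta m G (X ∩ Y) ≤ delta m G X + delta m G Y := by
  have hcard : (X ∪ Y).ncard + (X ∩ Y).ncard = X.ncard + Y.ncard :=
    Set.ncard_union_add_ncard_inter X Y (Set.toFinite X) (Set.toFinite Y)
  have hpairs : (pairSet G X).ncard + (pairSet G Y).ncard ≤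
      (pairSet G (X ∪ Y)).ncard + (pairSet G (X ∩ Y)).ncard := by
    have h1 : (pairSet G X ∪ pairSet G Y).ncard + (pairSet G X ∩ pairSet G Y).ncard
        = (pairSet G X).ncard + (pairSet G Y).ncard :=
      Set.ncard_union_add_ncard_inter _ _ (Set.toFinite _) (Set.toFinite _)
    have h2 : (pairSet G X ∪ pairSet G Y).ncard ≤ (pairSet G (X ∪ Y)).ncard :=
      Set.ncard_le_ncard
        (Set.union_subset (pairSet_mono G Set.subset_union_left)
          (pairSet_mono G Set.subset_union_right)) (Set.toFinite _)
    rw [pairSet_inter] at h1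
    omega
  have e1 := two_mul_delta m G (X ∪ Y)
  have e2 := two_mul_delta m G (X ∩ Y)
  have e3 := two_mul_delta m G X
  have e4 := two_mul_delta m G Y
  have hc : ((X ∪ Y).ncard : ℤ) + (X ∩ Y).ncard = (X.ncard : ℤ) + Y.ncard := by
    exact_mod_cast hcard
  have hp : ((pairSet G X).ncard : ℤ) + (pairSet G Y).ncard ≤
      ((pairSet G (X ∪ Y)).ncard : ℤ) + (pairSet G (X ∩ Y)).ncard := by
    exact_mod_cast hpairs
  have hcm : 2 * (m : ℤ) * (X ∪ Y).ncard + 2 * (m : ℤ) * (X ∩ Y).ncard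
      = 2 * (m : ℤ) * X.ncard + 2 * (m : ℤ) * Y.ncard := by
    linear_combination (2 * (m : ℤ)) * hc
  linarith

/-- `δ` on an induced subgraph agrees with `δ` on the image. -/
lemma delta_induce (m : ℕ) (G : SimpleGraph V) (B : Set V) (S : Set B) :
    delta m (G.induce B) S = delta m G (Subtype.val '' S) := by
  have hinj : Function.Injective (fun p : B × B => ((p.1 : V), (p.2 : V))) := by
    rintro ⟨a, b⟩ ⟨c, d⟩ h
    simp only [Prod.mk.injEq, Subtype.ext_iff] at h ⊢
    exact h
  have himg : (fun p : B × B => ((p.1 : V), (p.2 : V))) ''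
      {p : B × B | p.1 ∈ S ∧ p.2 ∈ S ∧ (G.induce B).Adj p.1 p.2}
      = pairSet G (Subtype.val '' S) := by
    ext ⟨x, y⟩
    constructor
    · rintro ⟨⟨a, b⟩, ⟨ha, hb, hadj⟩, heq⟩
      rw [← heq]
      exact ⟨⟨a, ha, rfl⟩, ⟨b, hb, rfl⟩, hadj⟩
    · rintro ⟨⟨a, ha, rfl⟩, ⟨b, hb, rfl⟩, hadj⟩
      exact ⟨(a, b), ⟨ha, hb, hadj⟩, rfl⟩
  have hec : edgeCount (G.induce B) S = edgeCount G (Subtype.val '' S) := by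
    rw [edgeCount, edgeCount]
    congr 1
    rw [← Set.ncard_image_of_injective
      {p : B × B | p.1 ∈ S ∧ p.2 ∈ S ∧ (G.induce B).Adj p.1 p.2} hinj, himg]
    rfl
  rw [delta, delta, hec, Set.ncard_image_of_injective _ Subtype.coe_injective]

end Aux

/-- Free amalgamation property of `(K₀, ≤)`: if a finite graph `G` has vertex
set `B ∪ C`, there are no edges between `B \ (B ∩ C)` and `C \ (B ∩ C)`, the
induced subgraphs on `B` and `C` lie in `K₀`, and `A = B ∩ C` is self-sufficient
in both `B` and `C`, then `G ∈ K₀`. -/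
theorem free_amalgamation {V : Type*} [Fintype V] (m : ℕ) (hm : 2 ≤ m)
    (G : SimpleGraph V) (B C : Set V) (hUnion : B ∪ C = Set.univ)
    (hfree : ∀ b ∈ B \ (B ∩ C), ∀ c ∈ C \ (B ∩ C), ¬ G.Adj b c)
    (hB : InK0 m (G.induce B)) (hC : InK0 m (G.induce C))
    (hssB : SelfSuff m G (B ∩ C) B) (hssC : SelfSuff m G (B ∩ C) C) :
    InK0 m G := by
  intro D
  set A := B ∩ C with hA
  have hAC : A ⊆ C := Set.inter_subset_right
  have hDsplit : D = (D ∩ B) ∪ (D ∩ C) := by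
    rw [← Set.inter_union_distrib_left, hUnion, Set.inter_univ]
  have hDint : (D ∩ B) ∩ (D ∩ C) = D ∩ A := by
    ext x; simp only [Set.mem_inter_iff, hA]; tauto
  have hPsplit : pairSet G D = pairSet G (D ∩ B) ∪ pairSet G (D ∩ C) := by
    apply Set.Subset.antisymm
    · rintro ⟨x, y⟩ ⟨hx, hy, hadj⟩
      have hxBC : x ∈ B ∪ C := hUnion ▸ Set.mem_univ x
      have hyBC : y ∈ B ∪ C := hUnion ▸ Set.mem_univ y
      by_cases hxB : x ∈ B
      · by_cases hyB : y ∈ B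
        · exact Or.inl ⟨⟨hx, hxB⟩, ⟨hy, hyB⟩, hadj⟩
        · have hyC : y ∈ C := hyBC.resolve_left hyB
          by_cases hxC : x ∈ C
          · exact Or.inr ⟨⟨hx, hxC⟩, ⟨hy, hyC⟩, hadj⟩
          · exact absurd hadj (hfree x ⟨hxB, fun h => hxC h.2⟩ y ⟨hyC, fun h => hyB h.1⟩)
      · have hxC : x ∈ C := hxBC.resolve_left hxB
        by_cases hyC : y ∈ C
        · exact Or.inr ⟨⟨hx, hxC⟩, ⟨hy, hyC⟩, hadj⟩
        · have hyB : y ∈ B := hyBC.resolve_right hyC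
          exact absurd hadj.symm (hfree y ⟨hyB, fun h => hyC h.2⟩ x ⟨hxC, fun h => hxB h.1⟩)
    · exact Set.union_subset (pairSet_mono G Set.inter_subset_left)
        (pairSet_mono G Set.inter_subset_left)
  have hcard : (D ∩ B).ncard + (D ∩ C).ncard = D.ncard + (D ∩ A).ncard := by
    have := Set.ncard_union_add_ncard_inter (D ∩ B) (D ∩ C) (Set.toFinite _) (Set.toFinite _)
    rw [hDint, ← hDsplit] at this
    omega
  have hpcard : (pairSet G (D ∩ B)).ncard + (pairSet G (D ∩ C)).ncard
      = (pairSet G D).ncard + (pairSet G (D ∩ A)).ncard := by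
    have := Set.ncard_union_add_ncard_inter (pairSet G (D ∩ B)) (pairSet G (D ∩ C))
      (Set.toFinite _) (Set.toFinite _)
    rw [pairSet_inter, hDint, ← hPsplit] at this
    omega
  have hadd : delta m G D + delta m G (D ∩ A) = delta m G (D ∩ B) + delta m G (D ∩ C) := by
    have e1 := two_mul_delta m G D
    have e2 := two_mul_delta m G (D ∩ A)
    have e3 := two_mul_delta m G (D ∩ B)
    have e4 := two_mul_delta m G (D ∩ C)
    have hc : ((D ∩ B).ncard : ℤ) + (D ∩ C).ncard = (D.ncard : ℤ) + (D ∩ A).ncard := by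
      exact_mod_cast hcard
    have hp : ((pairSet G (D ∩ B)).ncard : ℤ) + (pairSet G (D ∩ C)).ncard
        = ((pairSet G D).ncard : ℤ) + (pairSet G (D ∩ A)).ncard := by
      exact_mod_cast hpcard
    have hcm : 2 * (m : ℤ) * (D ∩ B).ncard + 2 * (m : ℤ) * (D ∩ C).ncard
        = 2 * (m : ℤ) * D.ncard + 2 * (m : ℤ) * (D ∩ A).ncard := by
      linear_combination (2 * (m : ℤ)) * hc
    linarith
  have hDB : (0 : ℤ) ≤ delta m G (D ∩ B) := by
    have := hB (Subtype.val ⁻¹' (D ∩ B))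
    rwa [delta_induce, Set.image_preimage_eq_inter_range, Subtype.range_coe,
      Set.inter_assoc, Set.inter_self] at this
  have hXA : (D ∩ C) ∩ A = D ∩ A := by
    ext x; simp only [Set.mem_inter_iff, hA]; tauto
  have hsub := delta_submod m G (D ∩ C) A
  have hss := hssC.2 ((D ∩ C) ∪ A) (Set.toFinite _) Set.subset_union_right
    (Set.union_subset Set.inter_subset_right hAC)
  rw [hXA] at hsub
  linarith
end

section
/- Transfer of the small index property: let M be the countable (K₀,≤)-generic graph, let A be a finite set of vertices of M, let X = gcl(A), and let G = Aut(M) and G_{{X}} the setwise stabilizer of X in G. Suppose that every subgroup K of G_{{X}} with |G_{{X}}/K| < 2^ℵ₀ contains G_B ∩ G_{{X}} for some finite set B of vertices of M (where G_B is the pointwise stabilizer of B). Then every subgroup H of G with |G/H| < 2^ℵ₀ contains G_B for some finite set B of vertices of M. -/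
open scoped Cardinal

section Aux

variable {V : Type*} {G : SimpleGraph V}

lemma edgeCount_image (g : G ≃g G) (S : Set V) :
    edgeCount G (⇑g '' S) = edgeCount G S := by
  have hset : {p : V × V | p.1 ∈ ⇑g '' S ∧ p.2 ∈ ⇑g '' S ∧ G.Adj p.1 p.2}
      = Prod.map ⇑g ⇑g '' {p : V × V | p.1 ∈ S ∧ p.2 ∈ S ∧ G.Adj p.1 p.2} := by
    ext ⟨x, y⟩
    constructor
    · rintro ⟨⟨a, ha, rfl⟩, ⟨b, hb, rfl⟩, hadj⟩
      exact ⟨(a, b), ⟨ha, hb, (g.map_adj_iff).mp hadj⟩, rfl⟩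
    · rintro ⟨⟨a, b⟩, ⟨ha, hb, hadj⟩, heq⟩
      rw [← heq]
      exact ⟨⟨a, ha, rfl⟩, ⟨b, hb, rfl⟩, (g.map_adj_iff).mpr hadj⟩
  unfold edgeCount
  rw [hset, Set.ncard_image_of_injective _ (g.injective.prodMap g.injective)]

lemma delta_image (m : ℕ) (g : G ≃g G) (S : Set V) :
    delta m G (⇑g '' S) = delta m G S := by
  unfold delta
  rw [Set.ncard_image_of_injective _ g.injective, edgeCount_image g S]

lemma selfSuff_image (m : ℕ) (g : G ≃g G) {S : Set V}
    (hS : SelfSuff m G S Set.univ) : SelfSuff m G (⇑g '' S) Set.univ := by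
  refine ⟨Set.subset_univ _, fun A' hfin hsub _ => ?_⟩
  have hA' : ⇑g '' (⇑g.symm '' A') = A' := by
    rw [← Set.image_comp]
    simp [Function.comp_def]
  have hsub2 : S ⊆ ⇑g.symm '' A' := fun a ha =>
    ⟨g a, hsub ⟨a, ha, rfl⟩, g.symm_apply_apply a⟩
  calc delta m G (⇑g '' S) = delta m G S := delta_image m g S
    _ ≤ delta m G (⇑g.symm '' A') :=
        hS.2 _ (hfin.image _) hsub2 (Set.subset_univ _)
    _ = delta m G A' := by rw [← delta_image m g (⇑g.symm '' A'), hA']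

lemma scl_image (m : ℕ) (g : G ≃g G) (A : Set V) :
    scl m G (⇑g '' A) = ⇑g '' scl m G A := by
  ext x
  constructor
  · intro hx
    refine ⟨g.symm x, ?_, g.apply_symm_apply x⟩
    rintro B ⟨hAB, hBfin, hBss⟩
    have hx' : x ∈ ⇑g '' B :=
      hx (⇑g '' B) ⟨Set.image_mono hAB, hBfin.image _, selfSuff_image m g hBss⟩
    obtain ⟨b, hb, rfl⟩ := hx'
    simpa using hb
  · rintro ⟨y, hy, rfl⟩ B' ⟨hAB', hB'fin, hB'ss⟩
    have h1 : A ⊆ ⇑g.symm '' B' := fun a ha =>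
      ⟨g a, hAB' ⟨a, ha, rfl⟩, g.symm_apply_apply a⟩
    have h2 : y ∈ ⇑g.symm '' B' :=
      hy (⇑g.symm '' B') ⟨h1, hB'fin.image _, selfSuff_image m g.symm hB'ss⟩
    obtain ⟨b, hb, rfl⟩ := h2
    simpa using hb

lemma gdim_image (m : ℕ) (g : G ≃g G) (S : Set V) :
    gdim m G (⇑g '' S) = gdim m G S := by
  unfold gdim
  rw [scl_image m g S, delta_image m g (scl m G S)]

lemma gcl_image_subset (m : ℕ) (g : G ≃g G) {A : Set V}
    (hg : ∀ a ∈ A, g a = a) : ⇑g '' gcl m G A ⊆ gcl m G A := by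
  rintro _ ⟨v, ⟨A', hA'sub, hA'fin, heq⟩, rfl⟩
  have him : ⇑g '' A' = A' := by
    rw [Set.image_congr (fun a ha => hg a (hA'sub ha)), Set.image_id']
  have himg : ⇑g '' (A' ∪ {v}) = A' ∪ {g v} := by
    rw [Set.image_union, him, Set.image_singleton]
  exact ⟨A', hA'sub, hA'fin, by rw [← himg, gdim_image, heq]⟩

lemma mem_setStab_of_fixes (m : ℕ) (g : G ≃g G) {A : Set V}
    (hg : ∀ a ∈ A, g a = a) : g ∈ setStab G (gcl m G A) := by
  show (fun v => g v) '' gcl m G A = gcl m G A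
  have hgsymm : ∀ a ∈ A, g.symm a = a := fun a ha => by
    conv_lhs => rw [← hg a ha]
    exact g.symm_apply_apply a
  apply Set.Subset.antisymm (gcl_image_subset m g hg)
  intro x hx
  have := gcl_image_subset m g.symm hgsymm ⟨x, hx, rfl⟩
  exact ⟨g.symm x, this, g.apply_symm_apply x⟩

end Aux

/-- Transfer of the small index property from the setwise stabilizer of
`X = gcl(A)` to the whole automorphism group. -/
theorem small_index_transfer (m : ℕ) (hm : 2 ≤ m) (V : Type)
    [Countable V] [Infinite V] (G : SimpleGraph V) (hG : IsGeneric m G)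
    (A : Set V) (hA : A.Finite)
    (hyp : ∀ K : Subgroup (setStab G (gcl m G A)),
      Cardinal.mk ((setStab G (gcl m G A)) ⧸ K) < Cardinal.continuum →
      ∃ B : Set V, B.Finite ∧ (pointStab G B).subgroupOf (setStab G (gcl m G A)) ≤ K) :
    ∀ H : Subgroup (G ≃g G), Cardinal.mk ((G ≃g G) ⧸ H) < Cardinal.continuum →
      ∃ B : Set V, B.Finite ∧ pointStab G B ≤ H := by
  intro H hH
  set X := gcl m G A with hX
  set S := setStab G X with hS
  set K := H.subgroupOf S with hK
  have hinj : Function.Injective (fun x : S ⧸ K =>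
      (Quotient.liftOn' x (fun s => QuotientGroup.mk (s : G ≃g G) : S → (G ≃g G) ⧸ H)
        (fun a b hab => by
          rw [QuotientGroup.leftRel_apply] at hab
          exact Quotient.sound' (QuotientGroup.leftRel_apply.mpr hab)))) := by
    intro x y
    induction x using Quotient.inductionOn'
    induction y using Quotient.inductionOn'
    intro hxy
    apply Quotient.sound'
    rw [QuotientGroup.leftRel_apply]
    have := Quotient.exact' hxy
    rw [QuotientGroup.leftRel_apply] at this
    exact Subgroup.mem_subgroupOf.mpr this
  have hcard : Cardinal.mk (S ⧸ K) < Cardinal.continuum :=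
    lt_of_le_of_lt (Cardinal.mk_le_of_injective hinj) hH
  obtain ⟨B, hBfin, hB⟩ := hyp K hcard
  refine ⟨B ∪ A, hBfin.union hA, ?_⟩
  intro g hg
  have hgA : ∀ a ∈ A, g a = a := fun a ha => hg a (Or.inr ha)
  have hgS : g ∈ S := mem_setStab_of_fixes m g hgA
  have hmem : (⟨g, hgS⟩ : S) ∈ (pointStab G B).subgroupOf S :=
    Subgroup.mem_subgroupOf.mpr (fun a ha => hg a (Or.inl ha))
  exact Subgroup.mem_subgroupOf.mp (hB hmem)
end
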